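/- The restriction map α ↦ α|_B from Con 𝐀 to Con 𝐁 is surjective and preserves arbitrary meets and arbitrary joins; in particular, for every family S ⊆ Con 𝐀, (⋁S)|_B = ⋁{θ|_B : θ∈S} and (⋀S)|_B = ⋀{θ|_B : θ∈S}. -/
import Mathlib


namespace Overalg

variable {A : Type*}

/-- `θ` is an equivalence relation on the whole type `A`, viewed as a set of pairs. -/
def IsEquivRel (θ : Set (A × A)) : Prop :=
  (∀ x : A, (x, x) ∈ θ) ∧ (∀ x y : A, (x, y) ∈ θ → (y, x) ∈ θ) ∧
    (∀ x y z : A, (x, y) ∈ θ → (y, z) ∈ θ → (x, z) ∈ θ)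

/-- `θ` is an equivalence relation on the subset `B` of `A`, viewed as a set of pairs. -/
def IsEquivOn (B : Set A) (θ : Set (A × A)) : Prop :=
  θ ⊆ B ×ˢ B ∧ (∀ x ∈ B, (x, x) ∈ θ) ∧ (∀ x y : A, (x, y) ∈ θ → (y, x) ∈ θ) ∧
    (∀ x y z : A, (x, y) ∈ θ → (y, z) ∈ θ → (x, z) ∈ θ)

/-- The clone of unary polynomials of the unary algebra `⟨A, F⟩`: the smallest set of
maps `A → A` containing `F`, the identity and all constants, closed under composition. -/
inductive Pol1 (F : Set (A → A)) : (A → A) → Prop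
  | base : ∀ f ∈ F, Pol1 F f
  | id : Pol1 F _root_.id
  | const : ∀ a : A, Pol1 F (fun _ => a)
  | comp : ∀ f g : A → A, Pol1 F f → Pol1 F g → Pol1 F (f ∘ g)

/-- A congruence of the unary algebra `⟨A, F⟩`. -/
def IsCon (F : Set (A → A)) (θ : Set (A × A)) : Prop :=
  IsEquivRel θ ∧ ∀ f ∈ F, ∀ p ∈ θ, (f p.1, f p.2) ∈ θ

end Overalg

namespace Overalg

variable {A : Type*}

/-- The congruence of `⟨A, F⟩` generated by a set of pairs. -/
def cgA (F : Set (A → A)) (s : Set (A × A)) : Set (A × A) :=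
  ⋂₀ {θ | IsCon F θ ∧ s ⊆ θ}

/-- A congruence of the algebra `𝐁 = ⟨B, F_B⟩`, where `B = e(A)` and
`F_B = {(e ∘ f)|_B : f ∈ Pol₁(𝐀)}`. -/
def IsConB (F : Set (A → A)) (e : A → A) (β : Set (A × A)) : Prop :=
  IsEquivOn (Set.range e) β ∧
    ∀ f : A → A, Pol1 F f → ∀ p ∈ β, (e (f p.1), e (f p.2)) ∈ β

/-- The congruence of `𝐁` generated by a set of pairs. -/
def cgB (F : Set (A → A)) (e : A → A) (s : Set (A × A)) : Set (A × A) :=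
  ⋂₀ {β | IsConB F e β ∧ s ⊆ β}

/-- McKenzie's hat operator: `β̂ = {(x,y) : ∀ f ∈ Pol₁(𝐀), (e(f x), e(f y)) ∈ β}`. -/
def hatRel (F : Set (A → A)) (e : A → A) (β : Set (A × A)) : Set (A × A) :=
  {p : A × A | ∀ f : A → A, Pol1 F f → (e (f p.1), e (f p.2)) ∈ β}

/-- Congruences of `𝐀` are closed under all unary polynomials. -/
lemma pol1_closed {F : Set (A → A)} {θ : Set (A × A)} (hθ : IsCon F θ) :
    ∀ f, Pol1 F f → ∀ p ∈ θ, (f p.1, f p.2) ∈ θ := by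
  intro f hf
  induction hf with
  | base f hfF => exact hθ.2 f hfF
  | id => intro p hp; exact hp
  | const a => intro p _; exact hθ.1.1 a
  | comp f g _ _ ihf ihg => intro p hp; exact ihf (g p.1, g p.2) (ihg p hp)

/-- The hat of a congruence of `𝐁` is a congruence of `𝐀`. -/
lemma hat_isCon {F : Set (A → A)} {e : A → A} {β : Set (A × A)}
    (hβ : IsConB F e β) : IsCon F (hatRel F e β) := by
  obtain ⟨⟨_, hrefl, hsymm, htrans⟩, hcomp⟩ := hβ
  refine ⟨⟨?_, ?_, ?_⟩, ?_⟩
  · intro x f _; exact hrefl _ ⟨f x, rfl⟩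
  · intro x y h f hf; exact hsymm _ _ (h f hf)
  · intro x y z h1 h2 f hf; exact htrans _ _ _ (h1 f hf) (h2 f hf)
  · intro f hfF p hp g hg
    exact hp (g ∘ f) (Pol1.comp g f hg (Pol1.base f hfF))

/-- The hat of a congruence of `𝐁` restricts back to it. -/
lemma hat_inter {F : Set (A → A)} {e : A → A} (hee : e ∘ e = e) {β : Set (A × A)}
    (hβ : IsConB F e β) :
    hatRel F e β ∩ (Set.range e ×ˢ Set.range e) = β := by
  apply Set.Subset.antisymm
  · rintro ⟨x, y⟩ ⟨hhat, ⟨a, ha⟩, ⟨b, hb⟩⟩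
    replace ha : e a = x := ha
    replace hb : e b = y := hb
    have hx : e x = x := by rw [← ha]; exact congrFun hee a
    have hy : e y = y := by rw [← hb]; exact congrFun hee b
    have := hhat _root_.id Pol1.id
    simpa [hx, hy] using this
  · rintro ⟨x, y⟩ hxy
    exact ⟨fun f hf => hβ.2 f hf (x, y) hxy, hβ.1.1 hxy⟩

/-- The restriction of a congruence of `𝐀` is a congruence of `𝐁`. -/
lemma restrict_isConB {F : Set (A → A)} {e : A → A} (heP : Pol1 F e)
    {α : Set (A × A)} (hα : IsCon F α) :
    IsConB F e (α ∩ (Set.range e ×ˢ Set.range e)) := by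
  have hrefl := hα.1.1
  have hsymm := hα.1.2.1
  have htrans := hα.1.2.2
  refine ⟨⟨Set.inter_subset_right, ?_, ?_, ?_⟩, ?_⟩
  · intro x hx; exact ⟨hrefl x, hx, hx⟩
  · rintro x y ⟨hxy, hx, hy⟩; exact ⟨hsymm _ _ hxy, hy, hx⟩
  · rintro x y z ⟨hxy, hx, _⟩ ⟨hyz, _, hz⟩; exact ⟨htrans _ _ _ hxy hyz, hx, hz⟩
  · intro f hf p hp
    exact ⟨pol1_closed hα (e ∘ f) (Pol1.comp e f heP hf) p hp.1,
      ⟨f p.1, rfl⟩, ⟨f p.2, rfl⟩⟩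

lemma cgA_spec (F : Set (A → A)) (s : Set (A × A)) :
    IsCon F (cgA F s) ∧ s ⊆ cgA F s := by
  constructor
  · refine ⟨⟨?_, ?_, ?_⟩, ?_⟩
    · intro x; exact Set.mem_sInter.2 fun θ hθ => hθ.1.1.1 x
    · intro x y h
      exact Set.mem_sInter.2 fun θ hθ => hθ.1.1.2.1 x y (Set.mem_sInter.1 h θ hθ)
    · intro x y z h1 h2
      exact Set.mem_sInter.2 fun θ hθ =>
        hθ.1.1.2.2 x y z (Set.mem_sInter.1 h1 θ hθ) (Set.mem_sInter.1 h2 θ hθ)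
    · intro f hf p hp
      exact Set.mem_sInter.2 fun θ hθ => hθ.1.2 f hf p (Set.mem_sInter.1 hp θ hθ)
  · intro p hp; exact Set.mem_sInter.2 fun θ hθ => hθ.2 hp

/-- `B × B` is a congruence of `𝐁`. -/
lemma prod_isConB (F : Set (A → A)) (e : A → A) :
    IsConB F e (Set.range e ×ˢ Set.range e) := by
  refine ⟨⟨le_refl _, ?_, ?_, ?_⟩, ?_⟩
  · intro x hx; exact ⟨hx, hx⟩
  · rintro x y ⟨hx, hy⟩; exact ⟨hy, hx⟩
  · rintro x y z ⟨hx, _⟩ ⟨_, hz⟩; exact ⟨hx, hz⟩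
  · intro f _ p _; exact ⟨⟨f p.1, rfl⟩, ⟨f p.2, rfl⟩⟩

lemma cgB_spec (F : Set (A → A)) (e : A → A) {s : Set (A × A)}
    (hs : s ⊆ Set.range e ×ˢ Set.range e) :
    IsConB F e (cgB F e s) ∧ s ⊆ cgB F e s := by
  constructor
  · refine ⟨⟨?_, ?_, ?_, ?_⟩, ?_⟩
    · intro p hp
      exact Set.mem_sInter.1 hp _ ⟨prod_isConB F e, hs⟩
    · intro x hx; exact Set.mem_sInter.2 fun β hβ => hβ.1.1.2.1 x hx
    · intro x y h
      exact Set.mem_sInter.2 fun β hβ => hβ.1.1.2.2.1 x y (Set.mem_sInter.1 h β hβ)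
    · intro x y z h1 h2
      exact Set.mem_sInter.2 fun β hβ =>
        hβ.1.1.2.2.2 x y z (Set.mem_sInter.1 h1 β hβ) (Set.mem_sInter.1 h2 β hβ)
    · intro f hf p hp
      exact Set.mem_sInter.2 fun β hβ => hβ.1.2 f hf p (Set.mem_sInter.1 hp β hβ)
  · intro p hp; exact Set.mem_sInter.2 fun β hβ => hβ.2 hp

end Overalg

open Overalg in
/-- The restriction map `α ↦ α|_B : Con 𝐀 → Con 𝐁` is surjective and preserves arbitrary
meets and arbitrary joins: for every family `S ⊆ Con 𝐀`, the meet (join) of `S` in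
`Con 𝐀` restricts to the meet (join) in `Con 𝐁` of the family of restrictions. -/
theorem restriction_surjective_complete_hom {A : Type*} (F : Set (A → A)) (e : A → A)
    (heP : Pol1 F e) (hee : e ∘ e = e) :
    (∀ β : Set (A × A), IsConB F e β →
      ∃ α : Set (A × A), IsCon F α ∧ α ∩ (Set.range e ×ˢ Set.range e) = β) ∧
    (∀ S : Set (Set (A × A)), (∀ θ ∈ S, IsCon F θ) →
      -- meets: the meet in `Con 𝐀` is `⋂₀ S`, the meet in `Con 𝐁` of the restrictions is
      -- `(B ×ˢ B) ∩ ⋂₀ {θ|_B : θ ∈ S}`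
      (⋂₀ S) ∩ (Set.range e ×ˢ Set.range e) =
        (Set.range e ×ˢ Set.range e) ∩
          ⋂₀ ((fun θ => θ ∩ (Set.range e ×ˢ Set.range e)) '' S) ∧
      -- joins: the join in `Con 𝐀` is the congruence generated by `⋃₀ S`, the join in
      -- `Con 𝐁` of the restrictions is the `𝐁`-congruence generated by their union
      (cgA F (⋃₀ S)) ∩ (Set.range e ×ˢ Set.range e) =
        cgB F e (⋃₀ ((fun θ => θ ∩ (Set.range e ×ˢ Set.range e)) '' S))) := by
  set B2 : Set (A × A) := Set.range e ×ˢ Set.range e with hB2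
  constructor
  · intro β hβ
    exact ⟨hatRel F e β, hat_isCon hβ, hat_inter hee hβ⟩
  · intro S hS
    constructor
    · -- meets
      ext p
      constructor
      · rintro ⟨h1, h2⟩
        refine ⟨h2, Set.mem_sInter.2 ?_⟩
        rintro u ⟨θ, hθS, rfl⟩
        exact ⟨Set.mem_sInter.1 h1 θ hθS, h2⟩
      · rintro ⟨h2, h1⟩
        exact ⟨Set.mem_sInter.2 fun θ hθ =>
          (Set.mem_sInter.1 h1 _ ⟨θ, hθ, rfl⟩).1, h2⟩
    · -- joins
      set t : Set (A × A) := ⋃₀ ((fun θ => θ ∩ B2) '' S) with ht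
      have htB2 : t ⊆ B2 := by
        rintro p ⟨u, ⟨θ, _, rfl⟩, hp⟩
        exact hp.2
      obtain ⟨hcgB, htcgB⟩ := cgB_spec F e htB2
      obtain ⟨hcgA, hscgA⟩ := cgA_spec F (⋃₀ S)
      apply Set.Subset.antisymm
      · -- ⊆ : via hat of cgB t
        have hsub : ⋃₀ S ⊆ hatRel F e (cgB F e t) := by
          rintro ⟨x, y⟩ ⟨θ, hθS, hxy⟩
          intro f hf
          refine htcgB ?_
          refine ⟨θ ∩ B2, ⟨θ, hθS, rfl⟩, ?_⟩
          exact ⟨pol1_closed (hS θ hθS) (e ∘ f) (Pol1.comp e f heP hf) (x, y) hxy,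
            ⟨f x, rfl⟩, ⟨f y, rfl⟩⟩
        have h1 : cgA F (⋃₀ S) ⊆ hatRel F e (cgB F e t) :=
          Set.sInter_subset_of_mem ⟨hat_isCon hcgB, hsub⟩
        calc cgA F (⋃₀ S) ∩ B2 ⊆ hatRel F e (cgB F e t) ∩ B2 :=
              Set.inter_subset_inter_left _ h1
          _ = cgB F e t := hat_inter hee hcgB
      · -- ⊇ : cgA ∩ B2 is a congruence of 𝐁 containing t
        refine Set.sInter_subset_of_mem ⟨restrict_isConB heP hcgA, ?_⟩
        rintro p ⟨u, ⟨θ, hθS, rfl⟩, hp⟩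
        exact ⟨hscgA ⟨θ, hθS, hp.1⟩, hp.2⟩
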